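/- With γ − β = λH + ν ((ν,H)=0) and L as above, Σ_{(β,ω)}(v, r₁e^γ)/(H,ω) = −r₁(c₁(v) − (rk v)γ, L) − r₁λa_γ(v), where rk v = r_γ(v) is the rank component and c₁(v) ∈ NS_ℚ is the degree-2 component of v, so that c₁(v) − (rk v)γ = d_γ(v)H + D_γ(v). -/

import Mathlib

variable {N : Type*} [AddCommGroup N] [Module ℚ N]

/-- The Mukai pairing on the rational Mukai lattice `Λ_ℚ = ℚ × N × ℚ`,
`⟨x,y⟩ = (x₁,y₁) − x₀y₂ − x₂y₀`. -/
def mpair (B : N →ₗ[ℚ] N →ₗ[ℚ] ℚ) (x y : ℚ × N × ℚ) : ℚ :=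
  B x.2.1 y.2.1 - x.1 * y.2.2 - x.2.2 * y.1

/-- `e^β = (1, β, (β,β)/2)`. -/
def mexp (B : N →ₗ[ℚ] N →ₗ[ℚ] ℚ) (β : N) : ℚ × N × ℚ :=
  (1, β, B β β / 2)

/-- The fundamental class `ϱ`. -/
def mrho : ℚ × N × ℚ := (0, 0, 1)

/-- `r_β(v) = −⟨v,ϱ⟩`. -/
def rInv (B : N →ₗ[ℚ] N →ₗ[ℚ] ℚ) (v : ℚ × N × ℚ) : ℚ :=
  -(mpair B v mrho)

/-- `a_β(v) = −⟨v, e^β⟩`. -/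
def aInv (B : N →ₗ[ℚ] N →ₗ[ℚ] ℚ) (β : N) (v : ℚ × N × ℚ) : ℚ :=
  -(mpair B v (mexp B β))

/-- `d_β(v) = ⟨v, H + (H,β)ϱ⟩ / (H,H)`. -/
def dInv (B : N →ₗ[ℚ] N →ₗ[ℚ] ℚ) (H β : N) (v : ℚ × N × ℚ) : ℚ :=
  mpair B v (0, H, B H β) / B H H

/-- `D_β(v)`, the `H`-orthogonal part of the `NS`-component of `v`. -/
def DInv (B : N →ₗ[ℚ] N →ₗ[ℚ] ℚ) (H β : N) (v : ℚ × N × ℚ) : N :=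
  v.2.1 - rInv B v • β - dInv B H β v • H

/-- The stability function `Z_{(β,ω)}(v) = ⟨e^{β+iω}, v⟩` with `ω = t•H`,
expanded as `⟨e^β,v⟩ + i⟨ω + (ω,β)ϱ, v⟩ − ((ω,ω)/2)⟨ϱ,v⟩`. -/
noncomputable def Zst (B : N →ₗ[ℚ] N →ₗ[ℚ] ℚ) (H β : N) (t : ℚ)
    (v : ℚ × N × ℚ) : ℂ :=
  ((mpair B (mexp B β) v : ℚ) : ℂ)
    + ((mpair B (0, t • H, B (t • H) β) v : ℚ) : ℂ) * Complex.I
    - ((B (t • H) (t • H) / 2 : ℚ) : ℂ) * ((mpair B mrho v : ℚ) : ℂ)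

/-- `Σ_{(β,ω)}(v,w) = Re Z(v)·Im Z(w) − Im Z(v)·Re Z(w)`. -/
noncomputable def Sigma2 (B : N →ₗ[ℚ] N →ₗ[ℚ] ℚ) (H β : N) (t : ℚ)
    (v w : ℚ × N × ℚ) : ℝ :=
  (Zst B H β t v).re * (Zst B H β t w).im
    - (Zst B H β t v).im * (Zst B H β t w).re

/-- `L = ((ω²) + λ²(H²) − (ν²))/(2(H²))·H + λν`. -/
def Ldiv (B : N →ₗ[ℚ] N →ₗ[ℚ] ℚ) (H ν : N) (t lam : ℚ) : N :=
  ((B (t • H) (t • H) + lam ^ 2 * B H H - B ν ν) / (2 * B H H)) • H + lam • ν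


lemma Sigma2_eq (B : N →ₗ[ℚ] N →ₗ[ℚ] ℚ) (H β : N) (t : ℚ) (v w : ℚ × N × ℚ) :
    Sigma2 B H β t v w =
      (((mpair B (mexp B β) v - (B (t • H) (t • H) / 2) * mpair B mrho v)
          * mpair B (0, t • H, B (t • H) β) w
        - mpair B (0, t • H, B (t • H) β) v
          * (mpair B (mexp B β) w - (B (t • H) (t • H) / 2) * mpair B mrho w) : ℚ) : ℝ) := by
  simp [Sigma2, Zst, Complex.ext_iff]

/-- `Σ_{(β,ω)}(v, r₁e^γ)/(H,ω) = −r₁(c₁(v) − (rk v)γ, L) − r₁λ a_γ(v)`,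
together with `c₁(v) − (rk v)γ = d_γ(v)H + D_γ(v)`. -/
theorem sigma_L_formula (B : N →ₗ[ℚ] N →ₗ[ℚ] ℚ)
    (hB : ∀ a b : N, B a b = B b a) (H : N) (hH : 0 < B H H)
    (β ν : N) (hν : B ν H = 0) (t : ℚ) (ht : 0 < t)
    (lam r₁ : ℚ) (hr₁ : r₁ ≠ 0)
    (γ : N) (hγ : γ = β + lam • H + ν) (v : ℚ × N × ℚ) :
    Sigma2 B H β t v (r₁ • mexp B γ) / ((B H (t • H) : ℚ) : ℝ)
        = ((-r₁ * B (v.2.1 - rInv B v • γ) (Ldiv B H ν t lam)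
            - r₁ * lam * aInv B γ v : ℚ) : ℝ) ∧
      v.2.1 - rInv B v • γ = dInv B H γ v • H + DInv B H γ v := by
  have e1 : B H β = B β H := hB _ _
  have e2 : B ν β = B β ν := hB _ _
  have e4 : B H ν = 0 := by rw [hB]; exact hν
  have e5 : B β v.2.1 = B v.2.1 β := hB _ _
  have e6 : B H v.2.1 = B v.2.1 H := hB _ _
  have e7 : B ν v.2.1 = B v.2.1 ν := hB _ _
  have hHH : B H H ≠ 0 := ne_of_gt hH
  have ht' : t ≠ 0 := ne_of_gt ht
  constructor
  · rw [Sigma2_eq, ← Rat.cast_div]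
    congr 1
    subst hγ
    simp only [mpair, mexp, mrho, Ldiv, rInv, aInv, dInv, Prod.smul_fst,
      Prod.smul_snd, Prod.fst, Prod.snd, smul_eq_mul, map_add, map_smul,
      LinearMap.add_apply, LinearMap.smul_apply, map_sub, LinearMap.sub_apply]
    simp only [e1, e2, hν, e4, e5, e6, e7, map_zero, LinearMap.zero_apply]
    field_simp
    ring
  · simp only [DInv]
    abel
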